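/- Let K be an imaginary quadratic field, 𝔫 a nonzero ideal of O_K, and N the smallest positive integer in 𝔫. Let Q = ax² + bxy + cy² be a primitive positive definite form of discriminant d_K with gcd(N, a) = 1, and let 𝔪 = ℤ(−a·conj(ω_Q)) + ℤa where ω_Q = (−b+√d_K)/(2a). Then 𝔫 and 𝔪 are relatively prime ideals of O_K (i.e., 𝔫 + 𝔪 = O_K), and the smallest positive integer in 𝔫𝔪 is Na. -/

import Mathlib

open NumberField

-- auxiliary: least positive integer in an ideal divides every integer in the ideal
lemma least_dvd_aux {R : Type*} [CommRing R] (I : Ideal R) (N : ℤ)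
    (hN : IsLeast {n : ℤ | 0 < n ∧ ((n : ℤ) : R) ∈ I} N)
    (n : ℤ) (hn : ((n : ℤ) : R) ∈ I) : N ∣ n := by
  have hN0 : 0 < N := hN.1.1
  have hr : ((n % N : ℤ) : R) ∈ I := by
    rw [Int.emod_def]
    push_cast
    exact I.sub_mem hn (I.mul_mem_right _ hN.1.2)
  rcases lt_or_eq_of_le (Int.emod_nonneg n hN0.ne') with h | h
  · exfalso
    have hle : N ≤ n % N := hN.2 ⟨h, hr⟩
    have hlt : n % N < N := Int.emod_lt_of_pos n hN0
    omega
  · exact Int.dvd_of_emod_eq_zero h.symm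

/-- Let `K` be an imaginary quadratic field, `𝔫` a nonzero ideal of
`O_K` with smallest positive integer `N`, and `Q = ax² + bxy + cy²` a primitive
positive definite form of discriminant `d_K` with `gcd(N, a) = 1`.  With
`𝔪 = ℤ(−a·conj(ω_Q)) + ℤa`, the ideals `𝔫` and `𝔪` are relatively prime, and the
smallest positive integer in `𝔫𝔪` is `Na`. -/
theorem stmt5 (K : Type*) [Field K] [NumberField K]
    (hdeg : Module.finrank ℚ K = 2) (hneg : NumberField.discr K < 0)
    (ι : K →+* ℂ)
    (𝔫 : Ideal (𝓞 K)) (h𝔫0 : 𝔫 ≠ ⊥)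
    (N : ℤ) (hN : IsLeast {n : ℤ | 0 < n ∧ ((n : ℤ) : 𝓞 K) ∈ 𝔫} N)
    (a b c : ℤ) (hpos : 0 < a)
    (hprim : Int.gcd a (Int.gcd b c) = 1)
    (hdisc : b ^ 2 - 4 * a * c = NumberField.discr K)
    (hgcd : Int.gcd N a = 1)
    (ω ωbar : K)
    (hroot : (a : K) * ω ^ 2 + (b : K) * ω + (c : K) = 0)
    (him : 0 < (ι ω).im)
    (hconj : ι ωbar = (starRingEnd ℂ) (ι ω))
    (𝔪 : Ideal (𝓞 K))
    (h𝔪 : algebraMap (𝓞 K) K '' (𝔪 : Set (𝓞 K))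
      = (Submodule.span ℤ ({-(a : K) * ωbar, (a : K)} : Set K) : Set K)) :
    𝔫 ⊔ 𝔪 = ⊤ ∧
    IsLeast {n : ℤ | 0 < n ∧ ((n : ℤ) : 𝓞 K) ∈ 𝔫 * 𝔪} (N * a) := by
  have hinj : Function.Injective (algebraMap (𝓞 K) K) :=
    FaithfulSMul.algebraMap_injective _ _
  -- a ∈ 𝔪
  have ha𝔪 : ((a : ℤ) : 𝓞 K) ∈ 𝔪 := by
    have haK : ((a : ℤ) : K) ∈
        (Submodule.span ℤ ({-(a : K) * ωbar, (a : K)} : Set K) : Set K) :=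
      Submodule.subset_span (by simp)
    rw [← h𝔪] at haK
    obtain ⟨m, hm, hme⟩ := haK
    have hm' : m = ((a : ℤ) : 𝓞 K) := hinj (by rw [hme]; simp)
    rwa [← hm']
  -- N ∈ 𝔫
  have hN𝔫 : ((N : ℤ) : 𝓞 K) ∈ 𝔫 := hN.1.2
  -- coprimality of ideals
  obtain ⟨u, v, huv⟩ := Int.isCoprime_iff_gcd_eq_one.mpr hgcd
  have hsup : 𝔫 ⊔ 𝔪 = ⊤ := by
    rw [Ideal.eq_top_iff_one]
    have h1 : (1 : 𝓞 K) = (u : 𝓞 K) * N + (v : 𝓞 K) * a := by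
      exact_mod_cast congrArg (fun z : ℤ => ((z : ℤ) : 𝓞 K)) huv.symm
    rw [h1]
    exact Submodule.add_mem _
      (Ideal.mem_sup_left (Ideal.mul_mem_left _ _ hN𝔫))
      (Ideal.mem_sup_right (Ideal.mul_mem_left _ _ ha𝔪))
  refine ⟨hsup, ⟨⟨mul_pos hN.1.1 hpos, ?_⟩, ?_⟩⟩
  · -- N * a ∈ 𝔫 * 𝔪
    have : ((N * a : ℤ) : 𝓞 K) = ((N : ℤ) : 𝓞 K) * ((a : ℤ) : 𝓞 K) := by push_cast; ring
    rw [this]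
    exact Ideal.mul_mem_mul hN𝔫 ha𝔪
  · rintro n ⟨hn0, hnmem⟩
    have hn𝔫 : ((n : ℤ) : 𝓞 K) ∈ 𝔫 := (Ideal.mul_le_inf hnmem).1
    have hn𝔪 : ((n : ℤ) : 𝓞 K) ∈ 𝔪 := (Ideal.mul_le_inf hnmem).2
    have hNn : N ∣ n := least_dvd_aux 𝔫 N hN n hn𝔫
    -- a ∣ n
    have han : a ∣ n := by
      have hmemK : ((n : ℤ) : K) ∈
          Submodule.span ℤ ({-(a : K) * ωbar, (a : K)} : Set K) := by
        have : ((n : ℤ) : K) ∈ algebraMap (𝓞 K) K '' (𝔪 : Set (𝓞 K)) :=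
          ⟨((n : ℤ) : 𝓞 K), hn𝔪, by simp⟩
        rwa [h𝔪] at this
      obtain ⟨x, y, hxy⟩ := Submodule.mem_span_pair.mp hmemK
      rw [zsmul_eq_mul, zsmul_eq_mul] at hxy
      have himbar : (ι ωbar).im = -(ι ω).im := by rw [hconj]; simp
      have hι := congrArg ι hxy
      simp only [map_add, map_mul, map_neg, map_intCast] at hι
      have him0 := congrArg Complex.im hι
      simp [Complex.add_im, Complex.mul_im, himbar] at him0
      -- him0 should give x * a * (ι ω).im = 0 up to sign
      have hx0 : x = 0 := by
        rcases him0 with h | h | h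
        · exact h
        · exact absurd h hpos.ne'
        · exact absurd h him.ne'
      rw [hx0] at hxy
      simp at hxy
      have h1 : ((n : ℤ) : K) = ((y * a : ℤ) : K) := by push_cast; linear_combination -hxy
      have hn' : n = y * a := Int.cast_injective h1
      exact ⟨y, by linarith [hn']⟩
    have hdvd : N * a ∣ n :=
      (Int.isCoprime_iff_gcd_eq_one.mpr hgcd).mul_dvd hNn han
    exact Int.le_of_dvd hn0 hdvd
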